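/- Let μ, μ' ∈ ℝ, σ, σ' > 0, ρ ∈ (-1,1), and let q be the bivariate Gaussian density with means (μ, μ'), variances σ², σ'² and correlation ρ. Set χ = Ξ(ρ, σ, σ') = ρ/(σσ'(1-ρ²)). Then q is the unique minimizer, over all probability densities q' on ℝ² whose first marginal is the Gaussian density N(μ, σ²), whose second marginal is the Gaussian density N(μ', σ'²), and which have finite second moments and finite differential entropy, of the functional q' ↦ ∫ (χ/2)·(x₀ - x₁)² q'(x₀,x₁) dx₀dx₁ - H(q'); that is, for any such q' that differs from q on a set of positive Lebesgue measure, ∫ (χ/2)(x₀-x₁)² q' dx - H(q') > ∫ (χ/2)(x₀-x₁)² q dx - H(q). -/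

import Mathlib

open MeasureTheory

/-- The 1D Gaussian density `N(μ, σ²)`. -/
noncomputable def gauss1 (μ σ x : ℝ) : ℝ :=
  (Real.sqrt (2 * Real.pi * σ ^ 2))⁻¹ * Real.exp (-(x - μ) ^ 2 / (2 * σ ^ 2))

/-- The bivariate Gaussian density with means `(μ, μ')`, variances `σ², σ'²` and
correlation `ρ`. -/
noncomputable def biGauss (μ μ' σ σ' ρ : ℝ) (x : ℝ × ℝ) : ℝ :=
  (2 * Real.pi * σ * σ' * Real.sqrt (1 - ρ ^ 2))⁻¹ *
    Real.exp (-((x.1 - μ) ^ 2 / σ ^ 2 - 2 * ρ * (x.1 - μ) * (x.2 - μ') / (σ * σ')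
      + (x.2 - μ') ^ 2 / σ' ^ 2) / (2 * (1 - ρ ^ 2)))


lemma gauss1_eq_pdf (m s : ℝ) :
    gauss1 m s = ProbabilityTheory.gaussianPDFReal m ⟨s^2, sq_nonneg s⟩ := rfl

lemma nnreal_sq_ne_zero {s : ℝ} (hs : 0 < s) : (⟨s^2, sq_nonneg s⟩ : NNReal) ≠ 0 := by
  intro h; have h' := congrArg Subtype.val h
  exact (pow_pos hs 2).ne' h'

lemma gauss1_pos {s : ℝ} (hs : 0 < s) (m x : ℝ) : 0 < gauss1 m s x := by
  rw [gauss1_eq_pdf]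
  exact ProbabilityTheory.gaussianPDFReal_pos _ _ _ (nnreal_sq_ne_zero hs)

lemma gauss1_meas (m s : ℝ) : Measurable (gauss1 m s) := by
  rw [gauss1_eq_pdf]; exact ProbabilityTheory.measurable_gaussianPDFReal _ _

lemma gauss1_integrable (m s : ℝ) : Integrable (gauss1 m s) := by
  rw [gauss1_eq_pdf]; exact ProbabilityTheory.integrable_gaussianPDFReal _ _

lemma gauss1_int_one {s : ℝ} (hs : 0 < s) (m : ℝ) : ∫ u, gauss1 m s u = 1 := by
  rw [gauss1_eq_pdf]
  exact ProbabilityTheory.integral_gaussianPDFReal_eq_one m (nnreal_sq_ne_zero hs)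

lemma gauss1_quad_integrable {s : ℝ} (hs : 0 < s) (m a b c : ℝ) :
    Integrable (fun u => (a*u^2 + b*u + c) * gauss1 m s u) := by
  have hk : 0 < (2*s^2)⁻¹ := by positivity
  set k := (2*s^2)⁻¹ with hkdef
  have base : ∀ a' b' c' : ℝ,
      Integrable (fun u : ℝ => (a'*u^2 + b'*u + c') * Real.exp (-k * u^2)) := by
    intro a' b' c'
    have h2 : Integrable (fun u : ℝ => u^2 * Real.exp (-k * u^2)) := by
      have := integrable_rpow_mul_exp_neg_mul_sq hk (s := 2) (by norm_num)
      have e : (fun u : ℝ => u ^ (2:ℝ) * Real.exp (-k * u^2))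
          = fun u : ℝ => u^2 * Real.exp (-k * u^2) := by
        funext u
        rw [show (2:ℝ) = ((2:ℕ):ℝ) by norm_num, Real.rpow_natCast]
      rwa [e] at this
    have h1 : Integrable (fun u : ℝ => u * Real.exp (-k * u^2)) := integrable_mul_exp_neg_mul_sq hk
    have h0 : Integrable (fun u : ℝ => Real.exp (-k * u^2)) := integrable_exp_neg_mul_sq hk
    have hsum := ((h2.const_mul a').add (h1.const_mul b')).add (h0.const_mul c')
    have e : (fun u : ℝ => (a'*u^2 + b'*u + c') * Real.exp (-k * u^2))
        = fun u : ℝ => (a' * (u^2 * Real.exp (-k * u^2)) + b' * (u * Real.exp (-k * u^2)))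
            + c' * Real.exp (-k * u^2) := by funext u; ring
    rw [e]; exact hsum
  have H2 : Integrable (fun u : ℝ => (a*u^2 + b*u + c) * Real.exp (-k * (u - m)^2)) := by
    have h := (base a (2*a*m + b) (a*m^2 + b*m + c)).comp_sub_right m
    have e : (fun u : ℝ => (a*u^2 + b*u + c) * Real.exp (-k * (u - m)^2))
        = fun u : ℝ => (a*(u-m)^2 + (2*a*m + b)*(u-m) + (a*m^2 + b*m + c))
            * Real.exp (-k * (u-m)^2) := by funext u; ring
    rw [e]; exact h
  have hG : (fun u => (a*u^2 + b*u + c) * gauss1 m s u)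
      = fun u => (Real.sqrt (2*Real.pi*s^2))⁻¹
          * ((a*u^2 + b*u + c) * Real.exp (-k * (u - m)^2)) := by
    funext u
    simp only [gauss1]
    rw [show -(u - m)^2 / (2*s^2) = -k * (u - m)^2 by rw [hkdef]; field_simp]
    ring
  rw [hG]
  exact H2.const_mul _


lemma quad_abs_le (α β γ δ ε ζ u v : ℝ) :
    |α*u^2 + β*v^2 + γ*(u*v) + δ*u + ε*v + ζ| ≤
      (|δ| + |ε| + |ζ|) + (|α| + |β| + |γ| + |δ| + |ε|) * (u^2 + v^2) := by
  have h1 : |u*v| ≤ u^2 + v^2 := by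
    rw [abs_mul]
    nlinarith [sq_nonneg (|u| - |v|), sq_abs u, sq_abs v, abs_nonneg u, abs_nonneg v]
  have h2 : |u| ≤ 1 + u^2 := by nlinarith [sq_nonneg (|u| - 1), sq_abs u]
  have h3 : |v| ≤ 1 + v^2 := by nlinarith [sq_nonneg (|v| - 1), sq_abs v]
  have bα : |α*u^2| = |α| * u^2 := by rw [abs_mul, abs_of_nonneg (sq_nonneg u)]
  have bβ : |β*v^2| = |β| * v^2 := by rw [abs_mul, abs_of_nonneg (sq_nonneg v)]
  have bγ : |γ*(u*v)| ≤ |γ| * (u^2+v^2) := by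
    rw [abs_mul]; exact mul_le_mul_of_nonneg_left h1 (abs_nonneg γ)
  have bδ : |δ*u| ≤ |δ| * (1 + u^2) := by
    rw [abs_mul]; exact mul_le_mul_of_nonneg_left h2 (abs_nonneg δ)
  have bε : |ε*v| ≤ |ε| * (1 + v^2) := by
    rw [abs_mul]; exact mul_le_mul_of_nonneg_left h3 (abs_nonneg ε)
  have tri : |α*u^2 + β*v^2 + γ*(u*v) + δ*u + ε*v + ζ|
      ≤ |α*u^2| + |β*v^2| + |γ*(u*v)| + |δ*u| + |ε*v| + |ζ| := by
    calc |α*u^2 + β*v^2 + γ*(u*v) + δ*u + ε*v + ζ|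
        ≤ |α*u^2 + β*v^2 + γ*(u*v) + δ*u + ε*v| + |ζ| := abs_add_le _ _
      _ ≤ (|α*u^2 + β*v^2 + γ*(u*v) + δ*u| + |ε*v|) + |ζ| := by
          gcongr; exact abs_add_le _ _
      _ ≤ ((|α*u^2 + β*v^2 + γ*(u*v)| + |δ*u|) + |ε*v|) + |ζ| := by
          gcongr; exact abs_add_le _ _
      _ ≤ (((|α*u^2 + β*v^2| + |γ*(u*v)|) + |δ*u|) + |ε*v|) + |ζ| := by
          gcongr; exact abs_add_le _ _
      _ ≤ ((((|α*u^2| + |β*v^2|) + |γ*(u*v)|) + |δ*u|) + |ε*v|) + |ζ| := by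
          gcongr; exact abs_add_le _ _
  rw [bα, bβ] at tri
  nlinarith [mul_nonneg (abs_nonneg δ) (sq_nonneg v), mul_nonneg (abs_nonneg ε) (sq_nonneg u), mul_nonneg (abs_nonneg α) (sq_nonneg v), mul_nonneg (abs_nonneg β) (sq_nonneg u), tri, bγ, bδ, bε]

lemma quadform_mul_integrable {p : ℝ×ℝ → ℝ} (hmeas : Measurable p) (hnn : ∀ x, 0 ≤ p x)
    (hp : Integrable p) (hmom : Integrable (fun x : ℝ×ℝ => (x.1^2 + x.2^2) * p x))
    (α β γ δ ε ζ : ℝ) :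
    Integrable (fun x : ℝ×ℝ =>
      (α*x.1^2 + β*x.2^2 + γ*(x.1*x.2) + δ*x.1 + ε*x.2 + ζ) * p x) := by
  refine Integrable.mono'
    ((hp.const_mul (|δ| + |ε| + |ζ|)).add (hmom.const_mul (|α| + |β| + |γ| + |δ| + |ε|))) ?_ ?_
  · exact ((by fun_prop : Measurable fun x : ℝ×ℝ =>
      (α*x.1^2 + β*x.2^2 + γ*(x.1*x.2) + δ*x.1 + ε*x.2 + ζ)).mul hmeas).aestronglyMeasurable
  · refine Filter.Eventually.of_forall fun x => ?_
    rw [Real.norm_eq_abs, abs_mul, abs_of_nonneg (hnn x)]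
    calc |α*x.1^2 + β*x.2^2 + γ*(x.1*x.2) + δ*x.1 + ε*x.2 + ζ| * p x
        ≤ ((|δ| + |ε| + |ζ|) + (|α| + |β| + |γ| + |δ| + |ε|) * (x.1^2 + x.2^2)) * p x :=
          mul_le_mul_of_nonneg_right (quad_abs_le α β γ δ ε ζ x.1 x.2) (hnn x)
      _ = (|δ| + |ε| + |ζ|) * p x
            + (|α| + |β| + |γ| + |δ| + |ε|) * ((x.1^2 + x.2^2) * p x) := by ring

section BiGaussAux
open MeasureTheory

lemma one_sub_sq_pos {ρ : ℝ} (hρ : ρ ∈ Set.Ioo (-1:ℝ) 1) : 0 < 1 - ρ^2 := by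
  obtain ⟨h1, h2⟩ := hρ; nlinarith

lemma biGauss_meas (μ μ' σ σ' ρ : ℝ) : Measurable (biGauss μ μ' σ σ' ρ) := by
  unfold biGauss; fun_prop

lemma biGauss_pos {μ μ' σ σ' ρ : ℝ} (hσ : 0 < σ) (hσ' : 0 < σ')
    (hρ : ρ ∈ Set.Ioo (-1:ℝ) 1) (x : ℝ×ℝ) : 0 < biGauss μ μ' σ σ' ρ x := by
  have ht := one_sub_sq_pos hρ
  have hst : 0 < Real.sqrt (1-ρ^2) := Real.sqrt_pos.mpr ht
  have h1 : 0 < 2*Real.pi*σ*σ'*Real.sqrt (1-ρ^2) :=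
    mul_pos (mul_pos (mul_pos (by positivity) hσ) hσ') hst
  exact mul_pos (inv_pos.mpr h1) (Real.exp_pos _)

lemma biGauss_swap {μ μ' σ σ' ρ : ℝ} (x : ℝ×ℝ) :
    biGauss μ μ' σ σ' ρ x = biGauss μ' μ σ' σ ρ x.swap := by
  simp only [biGauss, Prod.fst_swap, Prod.snd_swap]
  ring_nf

lemma biGauss_factor {μ μ' σ σ' ρ : ℝ} (hσ : 0 < σ) (hσ' : 0 < σ')
    (hρ : ρ ∈ Set.Ioo (-1:ℝ) 1) (x : ℝ×ℝ) :
    biGauss μ μ' σ σ' ρ x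
      = gauss1 μ σ x.1 * gauss1 (μ' + ρ*σ'/σ*(x.1-μ)) (σ' * Real.sqrt (1-ρ^2)) x.2 := by
  have ht := one_sub_sq_pos hρ
  have hst : 0 < Real.sqrt (1-ρ^2) := Real.sqrt_pos.mpr ht
  have h2π : (0:ℝ) < 2*Real.pi := by positivity
  simp only [biGauss, gauss1]
  rw [mul_mul_mul_comm, ← Real.exp_add]
  have c1 : Real.sqrt (2*Real.pi*σ^2) = Real.sqrt (2*Real.pi) * σ := by
    rw [Real.sqrt_mul h2π.le, Real.sqrt_sq hσ.le]
  have c2 : Real.sqrt (2*Real.pi*(σ'*Real.sqrt (1-ρ^2))^2)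
      = Real.sqrt (2*Real.pi) * (σ'*Real.sqrt (1-ρ^2)) := by
    rw [Real.sqrt_mul h2π.le, Real.sqrt_sq (by positivity)]
  congr 1
  · rw [c1, c2, ← mul_inv]
    congr 1
    have h := Real.mul_self_sqrt h2π.le
    linear_combination (-(σ*(σ'*Real.sqrt (1-ρ^2)))) * h
  · have hsq : (σ'*Real.sqrt (1-ρ^2))^2 = σ'^2*(1-ρ^2) := by
      rw [mul_pow, Real.sq_sqrt ht.le]
    rw [hsq]
    field_simp
    ring

lemma biGauss_marg0 {μ μ' σ σ' ρ : ℝ} (hσ : 0 < σ) (hσ' : 0 < σ')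
    (hρ : ρ ∈ Set.Ioo (-1:ℝ) 1) (x₀ : ℝ) :
    ∫ x₁, biGauss μ μ' σ σ' ρ (x₀, x₁) = gauss1 μ σ x₀ := by
  have hst : 0 < σ' * Real.sqrt (1-ρ^2) := by
    have := one_sub_sq_pos hρ; positivity
  simp only [biGauss_factor hσ hσ' hρ]
  rw [integral_const_mul, gauss1_int_one hst, mul_one]

lemma biGauss_marg1 {μ μ' σ σ' ρ : ℝ} (hσ : 0 < σ) (hσ' : 0 < σ')
    (hρ : ρ ∈ Set.Ioo (-1:ℝ) 1) (x₁ : ℝ) :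
    ∫ x₀, biGauss μ μ' σ σ' ρ (x₀, x₁) = gauss1 μ' σ' x₁ := by
  have e : (fun x₀ => biGauss μ μ' σ σ' ρ (x₀, x₁))
      = fun x₀ => biGauss μ' μ σ' σ ρ (x₁, x₀) := funext fun x₀ => biGauss_swap _
  rw [e]
  exact biGauss_marg0 hσ' hσ hρ x₁

end BiGaussAux

section BiGaussInt
open MeasureTheory

lemma biGauss_integrable {μ μ' σ σ' ρ : ℝ} (hσ : 0 < σ) (hσ' : 0 < σ')
    (hρ : ρ ∈ Set.Ioo (-1:ℝ) 1) : Integrable (biGauss μ μ' σ σ' ρ) := by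
  rw [Measure.volume_eq_prod ℝ ℝ]
  refine (integrable_prod_iff (biGauss_meas μ μ' σ σ' ρ).aestronglyMeasurable).mpr ⟨?_, ?_⟩
  · refine Filter.Eventually.of_forall fun x₀ => ?_
    have e : (fun x₁ => biGauss μ μ' σ σ' ρ (x₀, x₁))
        = fun x₁ => gauss1 μ σ x₀ * gauss1 (μ' + ρ*σ'/σ*(x₀-μ)) (σ' * Real.sqrt (1-ρ^2)) x₁ :=
      funext fun x₁ => biGauss_factor hσ hσ' hρ (x₀, x₁)
    rw [e]
    exact (gauss1_integrable _ _).const_mul _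
  · have e : (fun x₀ => ∫ x₁, ‖biGauss μ μ' σ σ' ρ (x₀, x₁)‖) = gauss1 μ σ := by
      funext x₀
      rw [← biGauss_marg0 hσ hσ' hρ x₀]
      congr 1
      funext x₁
      exact Real.norm_of_nonneg (biGauss_pos hσ hσ' hρ _).le
    rw [e]
    exact gauss1_integrable _ _

lemma biGauss_int_one {μ μ' σ σ' ρ : ℝ} (hσ : 0 < σ) (hσ' : 0 < σ')
    (hρ : ρ ∈ Set.Ioo (-1:ℝ) 1) : ∫ x : ℝ × ℝ, biGauss μ μ' σ σ' ρ x = 1 := by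
  rw [Measure.volume_eq_prod ℝ ℝ, integral_prod _ (by
    rw [← Measure.volume_eq_prod ℝ ℝ]; exact biGauss_integrable hσ hσ' hρ)]
  simp only [biGauss_marg0 hσ hσ' hρ]
  exact gauss1_int_one hσ μ

lemma biGauss_sq1_integrable {μ μ' σ σ' ρ : ℝ} (hσ : 0 < σ) (hσ' : 0 < σ')
    (hρ : ρ ∈ Set.Ioo (-1:ℝ) 1) :
    Integrable (fun x : ℝ×ℝ => x.1^2 * biGauss μ μ' σ σ' ρ x) := by
  rw [Measure.volume_eq_prod ℝ ℝ]
  have hmeas : Measurable fun x : ℝ×ℝ => x.1^2 * biGauss μ μ' σ σ' ρ x := by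
    have := biGauss_meas μ μ' σ σ' ρ; fun_prop
  refine (integrable_prod_iff hmeas.aestronglyMeasurable).mpr ⟨?_, ?_⟩
  · refine Filter.Eventually.of_forall fun x₀ => ?_
    have e : (fun x₁ => x₀^2 * biGauss μ μ' σ σ' ρ (x₀, x₁))
        = fun x₁ => (x₀^2 * gauss1 μ σ x₀)
            * gauss1 (μ' + ρ*σ'/σ*(x₀-μ)) (σ' * Real.sqrt (1-ρ^2)) x₁ := by
      funext x₁; rw [biGauss_factor hσ hσ' hρ (x₀, x₁)]; ring
    rw [e]
    exact (gauss1_integrable _ _).const_mul _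
  · have e : (fun x₀ => ∫ x₁, ‖x₀^2 * biGauss μ μ' σ σ' ρ (x₀, x₁)‖)
        = fun x₀ => (1*x₀^2 + 0*x₀ + 0) * gauss1 μ σ x₀ := by
      funext x₀
      have e2 : (fun x₁ => ‖x₀^2 * biGauss μ μ' σ σ' ρ (x₀, x₁)‖)
          = fun x₁ => x₀^2 * biGauss μ μ' σ σ' ρ (x₀, x₁) := by
        funext x₁
        exact Real.norm_of_nonneg (mul_nonneg (sq_nonneg _) (biGauss_pos hσ hσ' hρ _).le)
      rw [e2, integral_const_mul, biGauss_marg0 hσ hσ' hρ x₀]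
      ring
    rw [e]
    exact gauss1_quad_integrable hσ μ 1 0 0

lemma biGauss_mom {μ μ' σ σ' ρ : ℝ} (hσ : 0 < σ) (hσ' : 0 < σ')
    (hρ : ρ ∈ Set.Ioo (-1:ℝ) 1) :
    Integrable (fun x : ℝ×ℝ => (x.1^2 + x.2^2) * biGauss μ μ' σ σ' ρ x) := by
  have h1 := biGauss_sq1_integrable (μ:=μ) (μ':=μ') hσ hσ' hρ
  have h2 : Integrable (fun x : ℝ×ℝ => x.2^2 * biGauss μ μ' σ σ' ρ x) := by
    have h := biGauss_sq1_integrable (μ:=μ') (μ':=μ) (σ:=σ') (σ':=σ) hσ' hσ hρ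
    rw [Measure.volume_eq_prod ℝ ℝ] at h ⊢
    have := h.swap
    have e : ((fun x : ℝ×ℝ => x.1^2 * biGauss μ' μ σ' σ ρ x) ∘ Prod.swap)
        = fun x : ℝ×ℝ => x.2^2 * biGauss μ μ' σ σ' ρ x := by
      funext x
      simp only [Function.comp_apply, Prod.fst_swap]
      rw [← biGauss_swap x]
    rwa [e] at this
  have e : (fun x : ℝ×ℝ => (x.1^2 + x.2^2) * biGauss μ μ' σ σ' ρ x)
      = fun x : ℝ×ℝ => x.1^2 * biGauss μ μ' σ σ' ρ x + x.2^2 * biGauss μ μ' σ σ' ρ x := by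
    funext x; ring
  rw [e]
  exact h1.add h2

end BiGaussInt

section Fubini
open MeasureTheory

lemma integrable_center1 {p : ℝ×ℝ → ℝ} (hmeas : Measurable p) (hnn : ∀ x, 0 ≤ p x)
    (hp : Integrable p) (hmom : Integrable (fun x : ℝ×ℝ => (x.1^2 + x.2^2) * p x))
    (a b c m : ℝ) :
    Integrable (fun x : ℝ×ℝ => (a*(x.1-m)^2 + b*(x.1-m) + c) * p x) := by
  have e : (fun x : ℝ×ℝ => (a*(x.1-m)^2 + b*(x.1-m) + c) * p x)
      = fun x : ℝ×ℝ => (a*x.1^2 + 0*x.2^2 + 0*(x.1*x.2) + (b-2*a*m)*x.1 + 0*x.2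
          + (a*m^2 - b*m + c)) * p x := by
    funext x; ring
  rw [e]
  exact quadform_mul_integrable hmeas hnn hp hmom _ _ _ _ _ _

lemma integrable_center2 {p : ℝ×ℝ → ℝ} (hmeas : Measurable p) (hnn : ∀ x, 0 ≤ p x)
    (hp : Integrable p) (hmom : Integrable (fun x : ℝ×ℝ => (x.1^2 + x.2^2) * p x))
    (a b c m : ℝ) :
    Integrable (fun x : ℝ×ℝ => (a*(x.2-m)^2 + b*(x.2-m) + c) * p x) := by
  have e : (fun x : ℝ×ℝ => (a*(x.2-m)^2 + b*(x.2-m) + c) * p x)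
      = fun x : ℝ×ℝ => (0*x.1^2 + a*x.2^2 + 0*(x.1*x.2) + 0*x.1 + (b-2*a*m)*x.2
          + (a*m^2 - b*m + c)) * p x := by
    funext x; ring
  rw [e]
  exact quadform_mul_integrable hmeas hnn hp hmom _ _ _ _ _ _

lemma fubini_first {p : ℝ×ℝ → ℝ} (hmeas : Measurable p) (hnn : ∀ x, 0 ≤ p x)
    (hp : Integrable p) (hmom : Integrable (fun x : ℝ×ℝ => (x.1^2 + x.2^2) * p x))
    {m σ₀ : ℝ}
    (hmarg : ∀ᵐ x₀ ∂(volume : Measure ℝ), (∫ x₁ : ℝ, p (x₀, x₁)) = gauss1 m σ₀ x₀)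
    (a b c : ℝ) :
    ∫ x : ℝ×ℝ, (a*(x.1-c)^2 + b*(x.1-c)) * p x
      = ∫ u : ℝ, (a*(u-c)^2 + b*(u-c)) * gauss1 m σ₀ u := by
  have hint : Integrable (fun x : ℝ×ℝ => (a*(x.1-c)^2 + b*(x.1-c)) * p x) := by
    have := integrable_center1 hmeas hnn hp hmom a b 0 c
    simpa using this
  rw [Measure.volume_eq_prod ℝ ℝ] at hint ⊢
  rw [integral_prod _ hint]
  refine integral_congr_ae ?_
  filter_upwards [hmarg] with x₀ h
  rw [integral_const_mul, h]

lemma fubini_second {p : ℝ×ℝ → ℝ} (hmeas : Measurable p) (hnn : ∀ x, 0 ≤ p x)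
    (hp : Integrable p) (hmom : Integrable (fun x : ℝ×ℝ => (x.1^2 + x.2^2) * p x))
    {m σ₀ : ℝ}
    (hmarg : ∀ᵐ x₁ ∂(volume : Measure ℝ), (∫ x₀ : ℝ, p (x₀, x₁)) = gauss1 m σ₀ x₁)
    (a b c : ℝ) :
    ∫ x : ℝ×ℝ, (a*(x.2-c)^2 + b*(x.2-c)) * p x
      = ∫ u : ℝ, (a*(u-c)^2 + b*(u-c)) * gauss1 m σ₀ u := by
  have hint : Integrable (fun x : ℝ×ℝ => (a*(x.2-c)^2 + b*(x.2-c)) * p x) := by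
    have := integrable_center2 hmeas hnn hp hmom a b 0 c
    simpa using this
  rw [Measure.volume_eq_prod ℝ ℝ] at hint ⊢
  rw [integral_prod_symm _ hint]
  refine integral_congr_ae ?_
  filter_upwards [hmarg] with x₁ h
  rw [integral_const_mul, h]

end Fubini

/-- Differential entropy `H(f) = -∫ f log f` of a density on `ℝ²`. -/
noncomputable def diffEntropy2 (f : ℝ × ℝ → ℝ) : ℝ :=
  -∫ x : ℝ × ℝ, f x * Real.log (f x)

/-- The bivariate Gaussian density `q` with means `(μ, μ')`, variances
`σ², σ'²` and correlation `ρ ∈ (-1,1)` is, with `χ = Ξ(ρ, σ, σ') = ρ/(σσ'(1-ρ²))`, the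
unique minimizer of `q' ↦ ∫ (χ/2)(x₀-x₁)² q' - H(q')` over all probability densities
on `ℝ²` with Gaussian marginals `N(μ, σ²)`, `N(μ', σ'²)`, finite second moments and
finite differential entropy: any such `q'` differing from `q` on a set of positive
Lebesgue measure has strictly larger objective value. -/
lemma log_biGauss {μ μ' σ σ' ρ : ℝ} (hσ : 0 < σ) (hσ' : 0 < σ')
    (hρ : ρ ∈ Set.Ioo (-1:ℝ) 1) (x : ℝ×ℝ) :
    Real.log (biGauss μ μ' σ σ' ρ x)
      = -Real.log (2*Real.pi*σ*σ'*Real.sqrt (1-ρ^2))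
        + (-((x.1-μ)^2/σ^2 - 2*ρ*(x.1-μ)*(x.2-μ')/(σ*σ') + (x.2-μ')^2/σ'^2)
            / (2*(1-ρ^2))) := by
  have hZ : 0 < 2*Real.pi*σ*σ'*Real.sqrt (1-ρ^2) :=
    mul_pos (mul_pos (mul_pos (by positivity) hσ) hσ')
      (Real.sqrt_pos.mpr (one_sub_sq_pos hρ))
  simp only [biGauss]
  rw [Real.log_mul (inv_ne_zero hZ.ne') (Real.exp_ne_zero _), Real.log_inv, Real.log_exp]

set_option maxHeartbeats 1000000 in
theorem biGauss_unique_EOT_minimizer (μ μ' σ σ' ρ χ : ℝ)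
    (hσ : 0 < σ) (hσ' : 0 < σ') (hρ : ρ ∈ Set.Ioo (-1 : ℝ) 1)
    (hχ : χ = ρ / (σ * σ' * (1 - ρ ^ 2)))
    (q' : ℝ × ℝ → ℝ)
    (hq'meas : Measurable q')
    (hq'nonneg : ∀ x, 0 ≤ q' x)
    (hq'prob : ∫ x : ℝ × ℝ, q' x = 1)
    (hmarg0 : ∀ᵐ x₀ ∂(volume : Measure ℝ), (∫ x₁ : ℝ, q' (x₀, x₁)) = gauss1 μ σ x₀)
    (hmarg1 : ∀ᵐ x₁ ∂(volume : Measure ℝ), (∫ x₀ : ℝ, q' (x₀, x₁)) = gauss1 μ' σ' x₁)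
    (hmom : Integrable (fun x : ℝ × ℝ => (x.1 ^ 2 + x.2 ^ 2) * q' x))
    (hent : Integrable (fun x : ℝ × ℝ => q' x * Real.log (q' x)))
    (hne : ¬ (q' =ᵐ[(volume : Measure (ℝ × ℝ))] biGauss μ μ' σ σ' ρ)) :
    (∫ x : ℝ × ℝ, χ / 2 * (x.1 - x.2) ^ 2 * biGauss μ μ' σ σ' ρ x) -
        diffEntropy2 (biGauss μ μ' σ σ' ρ) <
      (∫ x : ℝ × ℝ, χ / 2 * (x.1 - x.2) ^ 2 * q' x) - diffEntropy2 q' := by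
  have ht : 0 < 1 - ρ^2 := one_sub_sq_pos hρ
  set q : ℝ×ℝ → ℝ := biGauss μ μ' σ σ' ρ with hqdef
  have qmeas : Measurable q := biGauss_meas μ μ' σ σ' ρ
  have qpos : ∀ x, 0 < q x := biGauss_pos hσ hσ' hρ
  have qnn : ∀ x, 0 ≤ q x := fun x => (qpos x).le
  have qint : Integrable q := biGauss_integrable hσ hσ' hρ
  have qone : ∫ x : ℝ×ℝ, q x = 1 := biGauss_int_one hσ hσ' hρ
  have qmom : Integrable (fun x : ℝ×ℝ => (x.1^2 + x.2^2) * q x) := biGauss_mom hσ hσ' hρ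
  have qmarg0 : ∀ᵐ x₀ ∂(volume : Measure ℝ), (∫ x₁ : ℝ, q (x₀, x₁)) = gauss1 μ σ x₀ :=
    Filter.Eventually.of_forall (biGauss_marg0 hσ hσ' hρ)
  have qmarg1 : ∀ᵐ x₁ ∂(volume : Measure ℝ), (∫ x₀ : ℝ, q (x₀, x₁)) = gauss1 μ' σ' x₁ :=
    Filter.Eventually.of_forall (biGauss_marg1 hσ hσ' hρ)
  have hq'int : Integrable q' := by
    by_contra hc; rw [integral_undef hc] at hq'prob; norm_num at hq'prob
  set a2 : ℝ := χ/2 - 1/(2*(1-ρ^2)*σ^2) with ha2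
  set a1 : ℝ := χ*(μ-μ') with ha1
  set b2 : ℝ := χ/2 - 1/(2*(1-ρ^2)*σ'^2) with hb2
  set b1 : ℝ := -(χ*(μ-μ')) with hb1
  set C : ℝ := χ/2*(μ-μ')^2 - Real.log (2*Real.pi*σ*σ'*Real.sqrt (1-ρ^2)) with hC
  have key : ∀ x : ℝ×ℝ, χ/2*(x.1-x.2)^2 + Real.log (q x)
      = (a2*(x.1-μ)^2 + a1*(x.1-μ)) + (b2*(x.2-μ')^2 + b1*(x.2-μ')) + C := by
    intro x
    rw [hqdef, log_biGauss hσ hσ' hρ, ha2, ha1, hb2, hb1, hC, hχ]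
    field_simp
    ring
  have master : ∀ p : ℝ×ℝ → ℝ, Measurable p → (∀ x, 0 ≤ p x) → Integrable p →
      (∫ x : ℝ×ℝ, p x) = 1 →
      Integrable (fun x : ℝ×ℝ => (x.1^2 + x.2^2) * p x) →
      (∀ᵐ x₀ ∂(volume : Measure ℝ), (∫ x₁ : ℝ, p (x₀, x₁)) = gauss1 μ σ x₀) →
      (∀ᵐ x₁ ∂(volume : Measure ℝ), (∫ x₀ : ℝ, p (x₀, x₁)) = gauss1 μ' σ' x₁) →
      Integrable (fun x : ℝ×ℝ => Real.log (q x) * p x) ∧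
      (∫ x : ℝ×ℝ, χ/2*(x.1-x.2)^2 * p x) + (∫ x : ℝ×ℝ, Real.log (q x) * p x)
        = (∫ u : ℝ, (a2*(u-μ)^2 + a1*(u-μ)) * gauss1 μ σ u)
          + (∫ u : ℝ, (b2*(u-μ')^2 + b1*(u-μ')) * gauss1 μ' σ' u) + C := by
    intro p pmeas pnn pint pone pmom pmarg0 pmarg1
    have hf1 : Integrable (fun x : ℝ×ℝ => χ/2*(x.1-x.2)^2 * p x) := by
      have e : (fun x : ℝ×ℝ => χ/2*(x.1-x.2)^2 * p x)
          = fun x : ℝ×ℝ => (χ/2*x.1^2 + χ/2*x.2^2 + (-χ)*(x.1*x.2) + 0*x.1 + 0*x.2 + 0)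
              * p x := by
        funext x; ring
      rw [e]; exact quadform_mul_integrable pmeas pnn pint pmom _ _ _ _ _ _
    have hAp : Integrable (fun x : ℝ×ℝ => (a2*(x.1-μ)^2 + a1*(x.1-μ)) * p x) := by
      have h := integrable_center1 pmeas pnn pint pmom a2 a1 0 μ
      simpa using h
    have hBp : Integrable (fun x : ℝ×ℝ => (b2*(x.2-μ')^2 + b1*(x.2-μ')) * p x) := by
      have h := integrable_center2 pmeas pnn pint pmom b2 b1 0 μ'
      simpa using h
    have hCp : Integrable (fun x : ℝ×ℝ => C * p x) := pint.const_mul C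
    have hgp : Integrable (fun x : ℝ×ℝ => (χ/2*(x.1-x.2)^2 + Real.log (q x)) * p x) := by
      have e : (fun x : ℝ×ℝ => (χ/2*(x.1-x.2)^2 + Real.log (q x)) * p x)
          = fun x : ℝ×ℝ => ((a2*(x.1-μ)^2 + a1*(x.1-μ)) * p x
              + (b2*(x.2-μ')^2 + b1*(x.2-μ')) * p x) + C * p x := by
        funext x; rw [key x]; ring
      rw [e]; exact (hAp.add hBp).add hCp
    have hlogp : Integrable (fun x : ℝ×ℝ => Real.log (q x) * p x) := by
      have e : (fun x : ℝ×ℝ => Real.log (q x) * p x)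
          = fun x : ℝ×ℝ => (χ/2*(x.1-x.2)^2 + Real.log (q x)) * p x
              - χ/2*(x.1-x.2)^2 * p x := by
        funext x; ring
      rw [e]; exact hgp.sub hf1
    refine ⟨hlogp, ?_⟩
    have split : (∫ x : ℝ×ℝ, χ/2*(x.1-x.2)^2 * p x) + (∫ x : ℝ×ℝ, Real.log (q x) * p x)
        = ∫ x : ℝ×ℝ, (χ/2*(x.1-x.2)^2 + Real.log (q x)) * p x := by
      rw [← integral_add hf1 hlogp]
      congr 1; funext x; ring
    rw [split]
    have e : (fun x : ℝ×ℝ => (χ/2*(x.1-x.2)^2 + Real.log (q x)) * p x)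
        = fun x : ℝ×ℝ => ((a2*(x.1-μ)^2 + a1*(x.1-μ)) * p x
            + (b2*(x.2-μ')^2 + b1*(x.2-μ')) * p x) + C * p x := by
      funext x; rw [key x]; ring
    have hAB : Integrable (fun x : ℝ×ℝ => (a2*(x.1-μ)^2 + a1*(x.1-μ)) * p x
        + (b2*(x.2-μ')^2 + b1*(x.2-μ')) * p x) := hAp.add hBp
    rw [e, integral_add hAB hCp, integral_add hAp hBp,
        fubini_first pmeas pnn pint pmom pmarg0 a2 a1 μ,
        fubini_second pmeas pnn pint pmom pmarg1 b2 b1 μ',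
        integral_const_mul, pone, mul_one]
  obtain ⟨hlogq', Vq'⟩ := master q' hq'meas hq'nonneg hq'int hq'prob hmom hmarg0 hmarg1
  obtain ⟨hlogq, Vq⟩ := master q qmeas qnn qint qone qmom qmarg0 qmarg1
  have hq'logq : Integrable (fun x : ℝ×ℝ => q' x * Real.log (q x)) := by
    have e : (fun x : ℝ×ℝ => q' x * Real.log (q x))
        = fun x : ℝ×ℝ => Real.log (q x) * q' x := by
      funext x; ring
    rw [e]; exact hlogq'
  set h : ℝ×ℝ → ℝ :=
    fun x => q' x * Real.log (q' x) - q' x * Real.log (q x) - q' x + q x with hh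
  have hint : Integrable h := by
    rw [hh]; exact ((hent.sub hq'logq).sub hq'int).add qint
  have hnn : ∀ x, 0 ≤ h x := by
    intro x
    have ha := qpos x
    rcases eq_or_lt_of_le (hq'nonneg x) with hs | hs
    · have h0 : q' x = 0 := hs.symm
      simp [hh, h0, ha.le]
    · have hd : 0 < q x / q' x := div_pos ha hs
      have hlog := Real.log_le_sub_one_of_pos hd
      rw [Real.log_div ha.ne' hs.ne'] at hlog
      have h2 : q' x * (Real.log (q x) - Real.log (q' x)) ≤ q' x * (q x / q' x - 1) :=
        mul_le_mul_of_nonneg_left hlog hs.le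
      have h3 : q' x * (q x / q' x - 1) = q x - q' x := by field_simp
      simp only [hh]
      linarith only [h2, h3]
  have hstrict : ∀ x, q' x ≠ q x → 0 < h x := by
    intro x hne'
    have ha := qpos x
    rcases eq_or_lt_of_le (hq'nonneg x) with hs | hs
    · have h0 : q' x = 0 := hs.symm
      simpa [hh, h0] using ha
    · have hd : 0 < q x / q' x := div_pos ha hs
      have hne1 : q x / q' x ≠ 1 := by
        intro hcon
        exact hne' ((div_eq_one_iff_eq hs.ne').mp hcon).symm
      have hlog := Real.log_lt_sub_one_of_pos hd hne1
      rw [Real.log_div ha.ne' hs.ne'] at hlog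
      have h2 : q' x * (Real.log (q x) - Real.log (q' x)) < q' x * (q x / q' x - 1) :=
        (mul_lt_mul_iff_right₀ hs).mpr hlog
      have h3 : q' x * (q x / q' x - 1) = q x - q' x := by field_simp
      simp only [hh]
      linarith only [h2, h3]
  have hpos : 0 < ∫ x : ℝ×ℝ, h x := by
    refine (integral_pos_iff_support_of_nonneg_ae
      (Filter.Eventually.of_forall hnn) hint).mpr ?_
    have hsub : {x : ℝ×ℝ | q' x ≠ q x} ⊆ Function.support h :=
      fun x hx => (hstrict x hx).ne'
    have hne0 : volume {x : ℝ×ℝ | q' x ≠ q x} ≠ 0 := by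
      intro hcon
      apply hne
      rw [Filter.EventuallyEq, ae_iff]
      exact hcon
    exact lt_of_lt_of_le (zero_lt_iff.mpr hne0) (measure_mono hsub)
  have hval : ∫ x : ℝ×ℝ, h x
      = (∫ x : ℝ×ℝ, q' x * Real.log (q' x)) - (∫ x : ℝ×ℝ, q' x * Real.log (q x))
        - 1 + 1 := by
    have i1 : Integrable (fun x : ℝ×ℝ => q' x * Real.log (q' x) - q' x * Real.log (q x)) :=
      hent.sub hq'logq
    have i2 : Integrable (fun x : ℝ×ℝ =>
        q' x * Real.log (q' x) - q' x * Real.log (q x) - q' x) := i1.sub hq'int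
    have e0 : (∫ x : ℝ×ℝ, h x) = ∫ x : ℝ×ℝ,
        (q' x * Real.log (q' x) - q' x * Real.log (q x) - q' x + q x) := rfl
    rw [e0, integral_add i2 qint, integral_sub i1 hq'int, integral_sub hent hq'logq,
      hq'prob, qone]
  have cq : (∫ x : ℝ×ℝ, q x * Real.log (q x)) = ∫ x : ℝ×ℝ, Real.log (q x) * q x := by
    congr 1; funext x; ring
  have cq' : (∫ x : ℝ×ℝ, q' x * Real.log (q x)) = ∫ x : ℝ×ℝ, Real.log (q x) * q' x := by
    congr 1; funext x; ring
  simp only [diffEntropy2]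
  linarith only [Vq, Vq', cq, cq', hpos, hval]
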